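/- If v, w ∈ [0,1]^N satisfy v ≼ w (i.e., v_i ≤ w_i for all i), then θ_v ≤ θ_w, where θ_u = max_{S ⊆ [N], |S| ≤ K} R(S, u) for a preference vector u. -/

import Mathlib

/-- The expected reward `R(S, v)` of an assortment `S`. -/
noncomputable def Rew {N : ℕ} (r v : Fin N → ℝ) (S : Finset (Fin N)) : ℝ :=
  (∑ i ∈ S, r i * v i) / (1 + ∑ i ∈ S, v i)

/-- `θ_v`: the optimal expected reward over assortments of size at most `K`. -/
noncomputable def thetaOpt (N K : ℕ) (r v : Fin N → ℝ) : ℝ :=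
  ((Finset.univ : Finset (Fin N)).powerset.filter (fun S => S.card ≤ K)).sup'
    ⟨∅, by simp⟩ (Rew r v)

/- `Top([N], w, θ)`: take the `min {K, N}` items `i` with the largest values
`(r i − θ) * w i` (ties broken in favor of smaller index), then remove all items
with `r i − θ ≤ 0`. -/
open Classical in
noncomputable def TopSet (N K : ℕ) (r w : Fin N → ℝ) (θ : ℝ) : Finset (Fin N) :=
  ((List.insertionSort (fun i j =>
      (r j - θ) * w j < (r i - θ) * w i ∨
      ((r i - θ) * w i = (r j - θ) * w j ∧ i ≤ j)) (List.finRange N)).take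
    (min K N)).toFinset.filter (fun i => θ < r i)
/-- Monotonicity of the optimal expected reward: `v ≼ w` implies `θ_v ≤ θ_w`. -/
theorem stmt4 (N K : ℕ) (hK : 1 ≤ K) (hKN : K ≤ N) (r v w : Fin N → ℝ)
    (hr : ∀ i, 0 < r i ∧ r i ≤ 1) (hv : ∀ i, 0 ≤ v i ∧ v i ≤ 1)
    (hw : ∀ i, 0 ≤ w i ∧ w i ≤ 1) (hvw : ∀ i, v i ≤ w i) :
    thetaOpt N K r v ≤ thetaOpt N K r w := by
  classical
  unfold thetaOpt
  apply Finset.sup'_le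
  intro S hS
  simp only [Finset.mem_filter, Finset.mem_powerset] at hS
  set θ := Rew r v S with hθ
  set T := S.filter (fun i => θ < r i) with hT
  have hTmem : T ∈ (Finset.univ : Finset (Fin N)).powerset.filter (fun S => S.card ≤ K) := by
    simp only [Finset.mem_filter, Finset.mem_powerset]
    exact ⟨Finset.subset_univ _,
      le_trans (Finset.card_le_card (Finset.filter_subset _ _)) hS.2⟩
  refine le_trans ?_ (Finset.le_sup' (Rew r w) hTmem)
  have hDv : (0:ℝ) < 1 + ∑ i ∈ S, v i := by
    have : (0:ℝ) ≤ ∑ i ∈ S, v i := Finset.sum_nonneg fun i _ => (hv i).1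
    linarith
  have hDw : (0:ℝ) < 1 + ∑ i ∈ T, w i := by
    have : (0:ℝ) ≤ ∑ i ∈ T, w i := Finset.sum_nonneg fun i _ => (hw i).1
    linarith
  have expand : ∀ (u : Fin N → ℝ) (A : Finset (Fin N)),
      ∑ i ∈ A, (r i - θ) * u i = (∑ i ∈ A, r i * u i) - θ * ∑ i ∈ A, u i := by
    intro u A
    rw [Finset.mul_sum, ← Finset.sum_sub_distrib]
    exact Finset.sum_congr rfl fun i _ => by ring
  have key : θ = ∑ i ∈ S, (r i - θ) * v i := by
    have h1 : θ * (1 + ∑ i ∈ S, v i) = ∑ i ∈ S, r i * v i := by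
      rw [hθ]; unfold Rew; field_simp
    rw [expand]; linarith
  have step1 : θ ≤ ∑ i ∈ T, (r i - θ) * v i := by
    have hsplit := Finset.sum_filter_add_sum_filter_not S (fun i => θ < r i)
      (fun i => (r i - θ) * v i)
    have hneg : ∑ i ∈ S.filter (fun i => ¬ θ < r i), (r i - θ) * v i ≤ 0 :=
      Finset.sum_nonpos fun i hi => mul_nonpos_of_nonpos_of_nonneg
        (by have := (Finset.mem_filter.mp hi).2; push_neg at this; linarith) ((hv i).1)
    rw [hT]; linarith
  have step2 : ∑ i ∈ T, (r i - θ) * v i ≤ ∑ i ∈ T, (r i - θ) * w i :=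
    Finset.sum_le_sum fun i hi => mul_le_mul_of_nonneg_left (hvw i)
      (by have := (Finset.mem_filter.mp hi).2; linarith)
  have final : θ ≤ ∑ i ∈ T, (r i - θ) * w i := le_trans step1 step2
  rw [expand] at final
  show θ ≤ Rew r w T
  unfold Rew
  rw [le_div_iff₀ hDw]
  nlinarith
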